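/- Let Φ_m(z_1,...,z_N) = ∏_{i<j}(z_i-z_j)^m. The derived polynomial of Φ_m under fusing z_1,...,z_a to z^{(a)} is ∏_{i=a+1}^N (z^{(a)} - z_i)^{ma} · ∏_{a+1 ≤ i < j ≤ N}(z_i - z_j)^m, up to a nonzero scalar factor depending only on ξ. -/
import Mathlib


open MvPolynomial

noncomputable section

/-- Variable type for the fusion of the first `a` variables: `Sum.inl i` are the
auxiliary variables `ξ i`, `Sum.inr none` is the fused variable (center of mass)
`z`, and `Sum.inr (some j)` are the untouched variables `z j` for `a ≤ j`. -/
abbrev FVars (N : ℕ) := Fin N ⊕ Option (Fin N)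

/-- The auxiliary variables `ξ i` for `i < a`, with the constraint `∑ ξ i = 0`
imposed by eliminating the last one. -/
def fuseXi (N a : ℕ) (i : Fin N) : MvPolynomial (FVars N) ℂ :=
  if i.val + 1 < a then X (Sum.inl i)
  else -(∑ j ∈ Finset.univ.filter (fun j : Fin N => j.val + 1 < a), X (Sum.inl j))

/-- Fusion substitution `z i = z + λ * ξ i` for `i < a`, where `λ` is the
polynomial variable and `z = X (Sum.inr none)`. -/
def fuse (N a : ℕ) : MvPolynomial (Fin N) ℂ →ₐ[ℂ] Polynomial (MvPolynomial (FVars N) ℂ) :=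
  MvPolynomial.aeval (fun i =>
    if i.val < a then Polynomial.C (X (Sum.inr none)) + Polynomial.X * Polynomial.C (fuseXi N a i)
    else Polynomial.C (X (Sum.inr (some i))))

/-- `Qcoeff N a P m` is the coefficient `Q^m` of `λ^m` in the fusion expansion of `P`. -/
def Qcoeff (N a : ℕ) (P : MvPolynomial (Fin N) ℂ) (m : ℕ) : MvPolynomial (FVars N) ℂ :=
  (fuse N a P).coeff m

/-- `minDeg N P a` is `S_a`: the minimal total degree of `P` in `z 1, ..., z a`. -/
def minDeg (N : ℕ) (P : MvPolynomial (Fin N) ℂ) (a : ℕ) : ℕ :=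
  sInf {d | ∃ mo ∈ P.support, d = ∑ i ∈ Finset.univ.filter (fun i : Fin N => i.val < a), mo i}

/-- Translation invariance of a multivariate polynomial. -/
def TransInv (N : ℕ) (P : MvPolynomial (Fin N) ℂ) : Prop :=
  ∀ c : ℂ, MvPolynomial.aeval (fun i : Fin N => X i + MvPolynomial.C c) P = P

/-- Symmetry of a multivariate polynomial. -/
def SymmPoly (N : ℕ) (P : MvPolynomial (Fin N) ℂ) : Prop :=
  ∀ σ : Equiv.Perm (Fin N), rename ⇑σ P = P

open Finset

/-- the derived polynomial of the Laughlin polynomial `Φ_m` under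
fusing `z_1, ..., z_a` into `z^{(a)}` is
`∏_{j ≥ a} (z^{(a)} - z_j)^{m a} ∏_{a ≤ i < j} (z_i - z_j)^m`, with the scalar
(`ξ`-dependent) factor `R(ξ) = ∏_{i<j<a} (ξ_i - ξ_j)^m`. -/
theorem stmt16 (N m a : ℕ) (hm : 0 < m) (ha : a ≤ N) :
    Qcoeff N a (∏ p ∈ Finset.univ.filter (fun p : Fin N × Fin N => p.1 < p.2),
        (X p.1 - X p.2) ^ m) (m * a.choose 2) =
      (∏ p ∈ Finset.univ.filter
          (fun p : Fin N × Fin N => p.1 < p.2 ∧ p.2.val < a),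
        (fuseXi N a p.1 - fuseXi N a p.2) ^ m) *
      ((∏ j ∈ Finset.univ.filter (fun j : Fin N => a ≤ j.val),
          (X (Sum.inr none) - X (Sum.inr (some j)) : MvPolynomial (FVars N) ℂ) ^ (m * a)) *
        ∏ p ∈ Finset.univ.filter
            (fun p : Fin N × Fin N => a ≤ p.1.val ∧ p.1 < p.2),
          (X (Sum.inr (some p.1)) - X (Sum.inr (some p.2))) ^ m) := by
  classical
  set f : Fin N × Fin N → Polynomial (MvPolynomial (FVars N) ℂ) :=
    fun p => (fuse N a (X p.1) - fuse N a (X p.2)) ^ m with hf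
  have hfuse : Qcoeff N a (∏ p ∈ Finset.univ.filter (fun p : Fin N × Fin N => p.1 < p.2),
      (X p.1 - X p.2) ^ m) (m * a.choose 2) =
      (∏ p ∈ Finset.univ.filter (fun p : Fin N × Fin N => p.1 < p.2), f p).coeff
        (m * a.choose 2) := by
    unfold Qcoeff
    rw [map_prod]
    simp only [map_pow, map_sub, hf]
  rw [hfuse]
  -- split the product into three parts
  set S := Finset.univ.filter (fun p : Fin N × Fin N => p.1 < p.2) with hS
  set S1 := Finset.univ.filter (fun p : Fin N × Fin N => p.1 < p.2 ∧ p.2.val < a) with hS1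
  set S2 := Finset.univ.filter
    (fun p : Fin N × Fin N => p.1.val < a ∧ a ≤ p.2.val) with hS2
  set S3 := Finset.univ.filter
    (fun p : Fin N × Fin N => a ≤ p.1.val ∧ p.1 < p.2) with hS3
  have hsplit : ∏ p ∈ S, f p = (∏ p ∈ S1, f p) * ((∏ p ∈ S2, f p) * (∏ p ∈ S3, f p)) := by
    rw [← Finset.prod_filter_mul_prod_filter_not S (fun p => p.2.val < a) f]
    congr 1
    · congr 1
      rw [hS, Finset.filter_filter]
    rw [← Finset.prod_filter_mul_prod_filter_not (S.filter (fun p => ¬ p.2.val < a))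
      (fun p => p.1.val < a) f]
    congr 1
    · congr 1
      rw [hS, Finset.filter_filter, Finset.filter_filter, hS2]
      ext p
      simp only [Finset.mem_filter, Finset.mem_univ, true_and, Fin.lt_def]
      omega
    · congr 1
      rw [hS, Finset.filter_filter, Finset.filter_filter, hS3]
      ext p
      simp only [Finset.mem_filter, Finset.mem_univ, true_and, Fin.lt_def]
      omega
  rw [hsplit]
  -- card of S1
  have hcard : S1.card = a.choose 2 := by
    rw [hS1, Finset.card_filter, ← Finset.univ_product_univ, Finset.sum_product_right]
    have h1' : ∀ j : Fin N, (∑ i : Fin N, if i < j ∧ j.val < a then 1 else 0) =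
        if j.val < a then j.val else 0 := by
      intro j
      by_cases hj : j.val < a
      · simp only [hj, and_true, if_pos]
        rw [← Finset.sum_filter]
        have : filter (fun i : Fin N => i < j) univ = Finset.Iio j := by ext; simp
        simp [this]
      · simp [hj]
    simp only [h1']
    rw [Fin.sum_univ_eq_sum_range (fun j => if j < a then j else 0) N, ← Finset.sum_filter]
    have : filter (fun x => x < a) (range N) = range a := by ext x; simp; omega
    rw [this, Finset.sum_range_id, Nat.choose_two_right]
  -- part 1
  have h1 : ∏ p ∈ S1, f p = Polynomial.X ^ (m * a.choose 2) *
      Polynomial.C (∏ p ∈ S1, (fuseXi N a p.1 - fuseXi N a p.2) ^ m) := by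
    rw [Finset.prod_congr rfl (g := fun p =>
        Polynomial.X ^ m * Polynomial.C ((fuseXi N a p.1 - fuseXi N a p.2) ^ m)) ?_]
    · rw [Finset.prod_mul_distrib, Finset.prod_const, ← pow_mul, ← map_prod, hcard]
    · intro p hp
      rw [hS1, Finset.mem_filter] at hp
      obtain ⟨-, hlt, h2a⟩ := hp
      have h1a : p.1.val < a := by have := Fin.lt_def.mp hlt; omega
      rw [hf]
      simp only [fuse, aeval_X, if_pos h1a, if_pos h2a]
      have hb : Polynomial.C (X (Sum.inr none) : MvPolynomial (FVars N) ℂ) +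
          Polynomial.X * Polynomial.C (fuseXi N a p.1) -
          (Polynomial.C (X (Sum.inr none)) + Polynomial.X * Polynomial.C (fuseXi N a p.2)) =
          Polynomial.X * Polynomial.C (fuseXi N a p.1 - fuseXi N a p.2) := by
        rw [map_sub]; ring
      rw [hb, mul_pow, ← map_pow]
  rw [h1, mul_assoc]
  have hcoe := Polynomial.coeff_X_pow_mul
    (Polynomial.C (∏ p ∈ S1, (fuseXi N a p.1 - fuseXi N a p.2) ^ m) *
      ((∏ p ∈ S2, f p) * ∏ p ∈ S3, f p)) (m * a.choose 2) 0
  rw [zero_add] at hcoe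
  rw [hcoe, Polynomial.coeff_zero_eq_eval_zero, Polynomial.eval_mul, Polynomial.eval_C]
  rw [hS1]
  congr 1
  rw [Polynomial.eval_mul]
  congr 1
  · -- S2 part
    rw [Polynomial.eval_prod]
    rw [Finset.prod_congr rfl (g := fun p : Fin N × Fin N =>
        ((X (Sum.inr none) : MvPolynomial (FVars N) ℂ) - X (Sum.inr (some p.2))) ^ m) ?_]
    · have hprod : S2 = (univ.filter (fun i : Fin N => i.val < a)) ×ˢ
          (univ.filter (fun j : Fin N => a ≤ j.val)) := by
        rw [hS2]; ext p
        simp [Finset.mem_product]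
      rw [hprod, Finset.prod_product]
      rw [Finset.prod_congr rfl (g := fun _ : Fin N =>
          ∏ j ∈ univ.filter (fun j : Fin N => a ≤ j.val),
            ((X (Sum.inr none) : MvPolynomial (FVars N) ℂ) - X (Sum.inr (some j))) ^ m)
          (fun x _ => rfl)]
      rw [Finset.prod_const, ← Finset.prod_pow]
      have hca : (univ.filter (fun i : Fin N => i.val < a)).card = a := by
        rw [Finset.card_filter, Fin.sum_univ_eq_sum_range (fun i => if i < a then 1 else 0) N,
          ← Finset.sum_filter]
        have : filter (fun x => x < a) (range N) = range a := by ext x; simp; omega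
        simp [this]
      rw [hca]
      refine Finset.prod_congr rfl fun j _ => ?_
      rw [← pow_mul]
    · intro p hp
      rw [hS2, Finset.mem_filter] at hp
      obtain ⟨-, h1a, h2a⟩ := hp
      rw [hf]
      simp only [fuse, aeval_X, if_pos h1a, if_neg (by omega : ¬ p.2.val < a)]
      simp
  · -- S3 part
    rw [Polynomial.eval_prod]
    refine Finset.prod_congr rfl fun p hp => ?_
    rw [hS3, Finset.mem_filter] at hp
    obtain ⟨-, h1a, hlt⟩ := hp
    have h2a : ¬ p.2.val < a := by have := Fin.lt_def.mp hlt; omega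
    rw [hf]
    simp only [fuse, aeval_X, if_neg (by omega : ¬ p.1.val < a), if_neg h2a]
    simp
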